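/- Let Y be a topological space, X ⊆ Y a subspace, A ⊆ X a subset, and H : X × [0,1] → Y a continuous map with H(x,0) = x for every x ∈ X; set h := H(·,1) and assume h maps X into X and h(a) = a for every a ∈ A. Let x₀ ∈ A and let α : [0,1] → X be a path with a := α(0) ∈ A and α(1) = x₀. If the trace loops τ ↦ H(a,τ) (a loop at a) and τ ↦ H(x₀,τ) (a loop at x₀) are both null-homotopic in Y, then the relative variation loop α⁻¹·(h∘α), a loop in X based at x₀, is null-homotopic in Y; equivalently, its homotopy class lies in the kernel of the inclusion-induced homomorphism π₁(X, x₀) → π₁(Y, x₀). -/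

import Mathlib

open unitInterval

section Aux

attribute [local instance] Path.Homotopic.setoid

private lemma homotopic_cast_aux {Z : Type*} [TopologicalSpace Z] {a b a' b' : Z}
    {p q : Path a b} (h : p.Homotopic q) (ea : a' = a) (eb : b' = b) :
    (p.cast ea eb).Homotopic (q.cast ea eb) := by
  subst ea; subst eb
  have hp : p.cast rfl rfl = p := by ext t; rfl
  have hq : q.cast rfl rfl = q := by ext t; rfl
  rw [hp, hq]; exact h

private lemma nat_homotopic_aux {X Y : Type u} [TopologicalSpace X] [TopologicalSpace Y]
    {f g : C(X, Y)} (F : f.Homotopy g) {x y : X} (p : Path x y) :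
    ((p.map f.continuous).trans (F.evalAt y)).Homotopic
      ((F.evalAt x).trans (p.map g.continuous)) := by
  let X' : TopCat := TopCat.of X
  let Y' : TopCat := TopCat.of Y
  have nat := (FundamentalGroupoidFunctor.homotopicMapsNatIso (X := X') (Y := Y')
      (f := f) (g := g) F).naturality
      (X := FundamentalGroupoid.mk x) (Y := FundamentalGroupoid.mk y) ⟦p⟧
  dsimp [FundamentalGroupoidFunctor.homotopicMapsNatIso] at nat
  have nat' : (⟦(p.map f.continuous).trans (F.evalAt y)⟧ :
      Path.Homotopic.Quotient (f x) (g y)) = ⟦(F.evalAt x).trans (p.map g.continuous)⟧ := by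
    exact nat
  exact Quotient.exact nat'

private lemma loop_null_aux {Z : Type*} [TopologicalSpace Z] {a b : Z}
    {p q : Path a b} {ω₁ : Path a a} {ω₂ : Path b b}
    (hnat : (p.trans ω₂).Homotopic (ω₁.trans q))
    (h1 : ω₁.Homotopic (Path.refl a)) (h2 : ω₂.Homotopic (Path.refl b)) :
    (p.symm.trans q).Homotopic (Path.refl b) := by
  have hpq : p.Homotopic q := by
    have e1 : p.Homotopic (p.trans ω₂) :=
      ((Path.Homotopic.hcomp (Path.Homotopic.refl p) h2).trans
        ⟨Path.Homotopy.transRefl p⟩).symm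
    have e2 : (ω₁.trans q).Homotopic q :=
      (Path.Homotopic.hcomp h1 (Path.Homotopic.refl q)).trans
        ⟨Path.Homotopy.reflTrans q⟩
    exact (e1.trans hnat).trans e2
  have e3 : (p.symm.trans q).Homotopic (p.symm.trans p) :=
    Path.Homotopic.hcomp (Path.Homotopic.refl p.symm) hpq.symm
  exact e3.trans ⟨(Path.Homotopy.reflSymmTrans p).symm⟩

end Aux

/-- Let `X ⊆ Y`, `A ⊆ X`, and `H : X × I → Y` continuous with `H(x,0) = x`; let
`h := H(·,1)` map `X` into `X` and fix `A` pointwise. If the trace loops at `a = α(0) ∈ A`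
and at `x₀ ∈ A` are null-homotopic in `Y`, then the relative variation loop `α⁻¹·(h∘α)`,
regarded as a loop in `Y` based at `x₀`, is null-homotopic in `Y`. -/
theorem stmt_4 {Y : Type*} [TopologicalSpace Y] (X : Set Y) (A : Set Y) (hAX : A ⊆ X)
    (H : X × I → Y) (hHcont : Continuous H)
    (hH0 : ∀ x : X, H (x, 0) = (x : Y))
    (h : X → X) (hcont : Continuous h)
    (hh : ∀ x : X, (h x : Y) = H (x, 1))
    (hfix : ∀ x : X, (x : Y) ∈ A → h x = x)
    (x₀ : X) (hx₀ : (x₀ : Y) ∈ A)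
    {a : X} (ha : (a : Y) ∈ A) (α : Path a x₀)
    (ωa : Path (a : Y) (a : Y)) (hωa : ∀ τ, ωa τ = H (a, τ))
    (ωx₀ : Path (x₀ : Y) (x₀ : Y)) (hωx₀ : ∀ τ, ωx₀ τ = H (x₀, τ))
    (hωaNull : ωa.Homotopic (Path.refl (a : Y)))
    (hωx₀Null : ωx₀.Homotopic (Path.refl (x₀ : Y))) :
    ((α.symm.trans ((α.map hcont).cast (hfix a ha).symm (hfix x₀ hx₀).symm)).map
        continuous_subtype_val).Homotopic (Path.refl (x₀ : Y)) := by
  classical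
  set β := (α.map hcont).cast (hfix a ha).symm (hfix x₀ hx₀).symm with hβ
  -- the inclusion and its composition with h, as continuous maps
  let f : C(X, Y) := ⟨Subtype.val, continuous_subtype_val⟩
  let g : C(X, Y) := ⟨fun x => (h x : Y), continuous_subtype_val.comp hcont⟩
  -- H as a homotopy from f to g
  let F : f.Homotopy g :=
    { toFun := fun p => H (p.2, p.1)
      continuous_toFun := hHcont.comp (by continuity)
      map_zero_left := fun x => hH0 x
      map_one_left := fun x => (hh x).symm }
  have e₂ : (g x₀ : Y) = (x₀ : Y) := congrArg Subtype.val (hfix x₀ hx₀)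
  have hnat0 := nat_homotopic_aux F α
  have hnat := homotopic_cast_aux hnat0 (rfl : (a : Y) = f a) e₂.symm
  have hl : ((α.map f.continuous).trans (F.evalAt x₀)).cast (rfl : (a : Y) = f a) e₂.symm
      = (α.map continuous_subtype_val).trans ωx₀ := by
    ext t
    show ((α.map f.continuous).trans (F.evalAt x₀)) t
      = ((α.map continuous_subtype_val).trans ωx₀) t
    simp only [Path.trans_apply]
    split_ifs with ht
    · rfl
    · rw [hωx₀]; rfl
  have hr : ((F.evalAt a).trans (α.map g.continuous)).cast (rfl : (a : Y) = f a) e₂.symm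
      = ωa.trans (β.map continuous_subtype_val) := by
    ext t
    show ((F.evalAt a).trans (α.map g.continuous)) t
      = (ωa.trans (β.map continuous_subtype_val)) t
    simp only [Path.trans_apply]
    split_ifs with ht
    · rw [hωa]; rfl
    · rfl
  rw [hl, hr] at hnat
  have hgoal := loop_null_aux hnat hωaNull hωx₀Null
  have : (α.symm.trans β).map continuous_subtype_val
      = (α.map continuous_subtype_val).symm.trans (β.map continuous_subtype_val) := by
    ext t
    simp only [Path.map_coe, Path.trans_apply, Path.symm_apply, Function.comp]
    split_ifs <;> rfl
  rw [this]
  exact hgoal
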